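/- (Lemma 1, part 1: the candidate fixed point lies in the zero fibre of the moment map and is θ-semistable.) Fix i ∈ ℤ/lℤ and define (a,b) by: a_i = b_i = 0; for j ≠ i, (a_j, b_j) = (0,1) if S_θ(i,j) < 0 and (a_j, b_j) = (1,0) if S_θ(i,j) > 0. Then a_j·b_j = 0 for all j (hence a_{j+1}b_{j+1} − a_jb_j = 0 for all j, so (a,b) lies in the zero fibre of the moment map), and (a,b) is θ-semistable. -/

import Mathlib

/-- The cyclic partial sum `S_θ(i,j) = θ_i + θ_{i+1} + ⋯ + θ_{j−1}` (sum of `θ` over the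
cyclic interval from `i` to `j−1`). -/
def cyclicSum {l : ℕ} {M : Type*} [AddCommMonoid M] (f : ZMod l → M) (i j : ZMod l) : M :=
  ∑ m ∈ Finset.range ((j - i).val), f (i + (m : ZMod l))

/-- A representation `(a, b)` of the doubled cyclic quiver with dimension vector `(1,…,1)`
is `θ`-semistable if every subset `S ⊆ ℤ/lℤ` which is stable under the action of `(a,b)`
(i.e. `j−1 ∈ S` and `a_j ≠ 0` imply `j ∈ S`; `j ∈ S` and `b_j ≠ 0` imply `j−1 ∈ S`)
satisfies `Σ_{k∈S} θ_k ≤ 0`. -/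
def IsThetaSemistable (l : ℕ) [NeZero l] (θ : ZMod l → ℤ) (a b : ZMod l → ℂ) : Prop :=
  ∀ S : Finset (ZMod l),
    (∀ j : ZMod l, j - 1 ∈ S → a j ≠ 0 → j ∈ S) →
    (∀ j : ZMod l, j ∈ S → b j ≠ 0 → j - 1 ∈ S) →
    ∑ k ∈ S, θ k ≤ 0

lemma sum_range_shift (l : ℕ) [NeZero l] (θ : ZMod l → ℤ) (i : ZMod l) :
    ∑ m ∈ Finset.range l, θ (i + (m : ZMod l)) = ∑ k : ZMod l, θ k := by
  refine Finset.sum_nbij' (fun m => i + (m : ZMod l)) (fun x => (x - i).val) ?_ ?_ ?_ ?_ ?_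
  · intros; exact Finset.mem_univ _
  · intro x _; exact Finset.mem_range.2 (ZMod.val_lt _)
  · intro m hm
    simp only [add_sub_cancel_left]
    exact ZMod.val_cast_of_lt (Finset.mem_range.1 hm)
  · intro x _
    rw [ZMod.natCast_zmod_val, add_sub_cancel]
  · intros; rfl

lemma cyclicSum_succ (l : ℕ) [NeZero l] (hl : 2 ≤ l) (θ : ZMod l → ℤ)
    (hsum : ∑ k : ZMod l, θ k = 0) (i j : ZMod l) :
    cyclicSum θ i (j + 1) = cyclicSum θ i j + θ j := by
  have hval1 : (1 : ZMod l).val = 1 := @ZMod.val_one l ⟨by omega⟩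
  by_cases h : j - i = -1
  · have hj1 : j + 1 = i := by
      have := h
      rw [sub_eq_iff_eq_add] at this
      rw [this]; ring
    have hji : (j - i).val = l - 1 := by
      rw [h]
      have : ((l - 1 : ℕ) : ZMod l) = -1 := by
        have h1 : 1 ≤ l := le_trans one_le_two hl
        push_cast [Nat.cast_sub h1]
        simp
      rw [← this, ZMod.val_cast_of_lt]
      omega
    have hj : j = i + ((l - 1 : ℕ) : ZMod l) := by
      rw [← hji, ZMod.natCast_zmod_val]; ring
    have h0 : cyclicSum θ i (j + 1) = 0 := by
      simp [cyclicSum, hj1]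
    rw [h0, cyclicSum, hji]
    have hl1 : l - 1 + 1 = l := by omega
    have hrange : ∑ m ∈ Finset.range (l - 1 + 1), θ (i + (m : ZMod l)) = 0 := by
      rw [hl1, sum_range_shift]; exact hsum
    rw [Finset.sum_range_succ, ← hj] at hrange
    omega
  · have hlt : (j - i).val < l - 1 := by
      have hne : (j - i).val ≠ l - 1 := by
        intro hc
        apply h
        have : ((l - 1 : ℕ) : ZMod l) = -1 := by
          have h1 : 1 ≤ l := le_trans one_le_two hl
          push_cast [Nat.cast_sub h1]
          simp
        rw [← ZMod.natCast_zmod_val (j - i), hc, this]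
      have := ZMod.val_lt (j - i)
      omega
    have hval : (j + 1 - i).val = (j - i).val + 1 := by
      have : j + 1 - i = (j - i) + 1 := by ring
      rw [this, ZMod.val_add, hval1, Nat.mod_eq_of_lt (by omega)]
    rw [cyclicSum, cyclicSum, hval, Finset.sum_range_succ, ZMod.natCast_zmod_val,
      add_sub_cancel]

theorem fixed_point_semistable (l : ℕ) [NeZero l] (hl : 2 ≤ l)
    (θ : ZMod l → ℤ) (hsum : ∑ k : ZMod l, θ k = 0)
    (hne : ∀ i j : ZMod l, i ≠ j → cyclicSum θ i j ≠ 0)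
    (i : ZMod l) (a b : ZMod l → ℂ)
    (hai : a i = 0) (hbi : b i = 0)
    (hneg : ∀ j : ZMod l, j ≠ i → cyclicSum θ i j < 0 → a j = 0 ∧ b j = 1)
    (hpos : ∀ j : ZMod l, j ≠ i → 0 < cyclicSum θ i j → a j = 1 ∧ b j = 0) :
    (∀ j : ZMod l, a j * b j = 0) ∧
    (∀ j : ZMod l, a (j + 1) * b (j + 1) - a j * b j = 0) ∧
    IsThetaSemistable l θ a b := by
  have part1 : ∀ j : ZMod l, a j * b j = 0 := by
    intro j
    by_cases hj : j = i
    · rw [hj, hai, zero_mul]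
    · rcases lt_trichotomy (cyclicSum θ i j) 0 with h | h | h
      · rw [(hneg j hj h).1, zero_mul]
      · exact absurd h (hne i j (Ne.symm hj))
      · rw [(hpos j hj h).2, mul_zero]
  refine ⟨part1, fun j => by rw [part1, part1, sub_zero], ?_⟩
  intro S h1 h2
  set f : ZMod l → ℤ := cyclicSum θ i with hf
  have fself : f i = 0 := by simp [hf, cyclicSum]
  have key : ∀ k : ZMod l, θ k = f (k + 1) - f k := by
    intro k
    rw [hf, cyclicSum_succ l hl θ hsum i k]
    ring
  set T : Finset (ZMod l) := S.image (· + 1) with hT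
  have hmemT : ∀ j : ZMod l, j ∈ T ↔ j - 1 ∈ S := by
    intro j
    simp only [hT, Finset.mem_image]
    constructor
    · rintro ⟨x, hx, rfl⟩; simpa using hx
    · intro hj; exact ⟨j - 1, hj, by ring⟩
  have hsumT : ∑ k ∈ S, f (k + 1) = ∑ j ∈ T, f j := by
    rw [hT, Finset.sum_image]
    intro x _ y _ h
    exact add_right_cancel h
  have hTS : ∀ j ∈ T \ S, f j ≤ 0 := by
    intro j hj
    rw [Finset.mem_sdiff, hmemT] at hj
    by_cases hji : j = i
    · rw [hji, fself]
    · rcases lt_trichotomy (f j) 0 with h | h | h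
      · exact h.le
      · exact absurd h (hne i j (Ne.symm hji))
      · exfalso
        exact hj.2 (h1 j hj.1 (by rw [(hpos j hji h).1]; exact one_ne_zero))
  have hST : ∀ j ∈ S \ T, 0 ≤ f j := by
    intro j hj
    rw [Finset.mem_sdiff, hmemT] at hj
    by_cases hji : j = i
    · rw [hji, fself]
    · rcases lt_trichotomy (f j) 0 with h | h | h
      · exfalso
        exact hj.2 (h2 j hj.1 (by rw [(hneg j hji h).2]; exact one_ne_zero))
      · exact absurd h (hne i j (Ne.symm hji))
      · exact h.le
  have e1 : ∑ j ∈ T ∩ S, f j + ∑ j ∈ T \ S, f j = ∑ j ∈ T, f j :=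
    Finset.sum_inter_add_sum_sdiff T S f
  have e2 : ∑ j ∈ S ∩ T, f j + ∑ j ∈ S \ T, f j = ∑ j ∈ S, f j :=
    Finset.sum_inter_add_sum_sdiff S T f
  have e3 : S ∩ T = T ∩ S := Finset.inter_comm S T
  have calc1 : ∑ k ∈ S, θ k = ∑ j ∈ T, f j - ∑ j ∈ S, f j := by
    rw [← hsumT, ← Finset.sum_sub_distrib]
    exact Finset.sum_congr rfl fun k _ => key k
  have hle1 : ∑ j ∈ T \ S, f j ≤ 0 := Finset.sum_nonpos hTS
  have hle2 : 0 ≤ ∑ j ∈ S \ T, f j := Finset.sum_nonneg hST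
  rw [e3] at e2
  omega
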